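/- Let N > 1. The function g₁(ζ) = (1+√(4ζN+1))/(2N) is strictly increasing in ζ > 0, the function g₂(ζ) = 1 - ζ·ln((2ζN+1+√(4ζN+1))/(2ζN)) is strictly decreasing in ζ > 0, g₁(0⁺) = 1/N < 1 = g₂(0⁺), and hence there exists a unique ζ_c > 0 with g₁(ζ_c) = g₂(ζ_c); moreover g₁(ζ) < g₂(ζ) if and only if ζ < ζ_c. -/

import Mathlib

open Filter Topology Set

/-- Auxiliary: `log ((s+1)/(s-1)) > 2/(s+1)` for `s > 1`. -/
lemma aux_log_lb {s : ℝ} (hs : 1 < s) :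
    2 / (s + 1) < Real.log (s + 1) - Real.log (s - 1) := by
  have h1 : (0:ℝ) < s - 1 := by linarith
  have h2 : (0:ℝ) < s + 1 := by linarith
  have hne : (s - 1) / (s + 1) ≠ 1 := by
    intro h
    rw [div_eq_one_iff_eq h2.ne'] at h
    linarith
  have := Real.log_lt_sub_one_of_pos (div_pos h1 h2) hne
  rw [Real.log_div h1.ne' h2.ne'] at this
  have hdiv : (s - 1) / (s + 1) - 1 = -(2 / (s + 1)) := by
    field_simp
    ring
  rw [hdiv] at this
  linarith

/-- Auxiliary: `f s = (s^2-1)(log(s+1) - log(s-1))` is strictly increasing on `(1, ∞)`. -/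
lemma aux_f_mono :
    StrictMonoOn (fun s : ℝ => (s ^ 2 - 1) * (Real.log (s + 1) - Real.log (s - 1)))
      (Set.Ioi 1) := by
  apply strictMonoOn_of_deriv_pos (convex_Ioi 1)
  · apply ContinuousOn.mul
    · fun_prop
    · apply ContinuousOn.sub
      · exact Real.continuousOn_log.comp (by fun_prop)
          (fun s hs => by simp only [mem_Ioi] at hs; intro h; simp at h; linarith)
      · exact Real.continuousOn_log.comp (by fun_prop)
          (fun s hs => by simp only [mem_Ioi] at hs; intro h; simp at h; linarith)
  · intro s hs
    rw [interior_Ioi] at hs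
    simp only [mem_Ioi] at hs
    have h1 : (0:ℝ) < s - 1 := by linarith
    have h2 : (0:ℝ) < s + 1 := by linarith
    have hd : HasDerivAt (fun s : ℝ => (s ^ 2 - 1) * (Real.log (s + 1) - Real.log (s - 1)))
        (2 * s * (Real.log (s + 1) - Real.log (s - 1)) +
          (s ^ 2 - 1) * (1 / (s + 1) - 1 / (s - 1))) s := by
      have ha : HasDerivAt (fun s : ℝ => s ^ 2 - 1) (2 * s) s := by
        simpa using ((hasDerivAt_pow 2 s).sub_const 1)
      have hb : HasDerivAt (fun s : ℝ => Real.log (s + 1) - Real.log (s - 1))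
          (1 / (s + 1) - 1 / (s - 1)) s := by
        have hb1 : HasDerivAt (fun s : ℝ => Real.log (s + 1)) (1 / (s + 1)) s := by
          simpa [Function.comp_def] using (Real.hasDerivAt_log h2.ne').comp s ((hasDerivAt_id s).add_const 1)
        have hb2 : HasDerivAt (fun s : ℝ => Real.log (s - 1)) (1 / (s - 1)) s := by
          simpa [Function.comp_def] using (Real.hasDerivAt_log h1.ne').comp s ((hasDerivAt_id s).sub_const 1)
        exact hb1.sub hb2
      simpa [mul_comm] using ha.fun_mul hb
    rw [hd.deriv]
    have hkey : (s ^ 2 - 1) * (1 / (s + 1) - 1 / (s - 1)) = -2 := by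
      field_simp
      ring
    rw [hkey]
    have hlb := aux_log_lb hs
    have h3 : 2 * s * (2 / (s + 1)) < 2 * s * (Real.log (s + 1) - Real.log (s - 1)) :=
      mul_lt_mul_of_pos_left hlb (by linarith)
    have h4 : (2:ℝ) < 2 * s * (2 / (s + 1)) := by
      rw [show 2 * s * (2 / (s + 1)) = 4 * s / (s + 1) from by ring, lt_div_iff₀ h2]
      nlinarith
    linarith

theorem stmt16 (N : ℝ) (hN : 1 < N)
    (g₁ g₂ : ℝ → ℝ)
    (hg₁ : g₁ = fun ζ => (1 + Real.sqrt (4 * ζ * N + 1)) / (2 * N))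
    (hg₂ : g₂ = fun ζ => 1 - ζ * Real.log
      ((2 * ζ * N + 1 + Real.sqrt (4 * ζ * N + 1)) / (2 * ζ * N))) :
    StrictMonoOn g₁ (Set.Ioi 0) ∧
    StrictAntiOn g₂ (Set.Ioi 0) ∧
    Tendsto g₁ (𝓝[>] (0:ℝ)) (𝓝 (1 / N)) ∧
    Tendsto g₂ (𝓝[>] (0:ℝ)) (𝓝 1) ∧
    1 / N < 1 ∧
    ∃! ζc : ℝ, 0 < ζc ∧ g₁ ζc = g₂ ζc ∧
      ∀ ζ > (0:ℝ), (g₁ ζ < g₂ ζ ↔ ζ < ζc) := by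
  have hN0 : (0:ℝ) < N := by linarith
  set s : ℝ → ℝ := fun ζ => Real.sqrt (4 * ζ * N + 1) with hs_def
  -- basic facts about s
  have hs_sq : ∀ ζ : ℝ, 0 < ζ → s ζ ^ 2 = 4 * ζ * N + 1 := by
    intro ζ hζ
    exact Real.sq_sqrt (by nlinarith)
  have hs_gt1 : ∀ ζ : ℝ, 0 < ζ → 1 < s ζ := by
    intro ζ hζ
    have : (1:ℝ) = Real.sqrt 1 := by simp
    rw [this]
    exact Real.sqrt_lt_sqrt (by norm_num) (by nlinarith)
  have hs_mono : ∀ ζ₁ ζ₂ : ℝ, 0 < ζ₁ → ζ₁ < ζ₂ → s ζ₁ < s ζ₂ := by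
    intro ζ₁ ζ₂ h1 h12
    exact Real.sqrt_lt_sqrt (by nlinarith) (by nlinarith)
  -- key algebraic identity for the argument of log
  have harg : ∀ ζ : ℝ, 0 < ζ →
      (2 * ζ * N + 1 + s ζ) / (2 * ζ * N) = (s ζ + 1) / (s ζ - 1) := by
    intro ζ hζ
    have hsq := hs_sq ζ hζ
    have hs1 := hs_gt1 ζ hζ
    have hd1 : (0:ℝ) < 2 * ζ * N := by positivity
    have hd2 : (0:ℝ) < s ζ - 1 := by linarith
    rw [div_eq_div_iff hd1.ne' hd2.ne']
    nlinarith [hsq]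
  -- rewrite g₂ on Ioi 0
  have hg₂' : ∀ ζ : ℝ, 0 < ζ →
      g₂ ζ = 1 - (1 / (4 * N)) *
        ((s ζ ^ 2 - 1) * (Real.log (s ζ + 1) - Real.log (s ζ - 1))) := by
    intro ζ hζ
    have hsq := hs_sq ζ hζ
    have hs1 := hs_gt1 ζ hζ
    rw [hg₂]
    simp only
    rw [harg ζ hζ, Real.log_div (by linarith) (by linarith), hsq]
    field_simp
    ring
  -- g₁ strictly monotone
  have hg₁mono : StrictMonoOn g₁ (Set.Ioi 0) := by
    intro ζ₁ h1 ζ₂ h2 h12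
    simp only [mem_Ioi] at h1 h2
    have hm := hs_mono ζ₁ ζ₂ h1 h12
    have h2N : (0:ℝ) < 2 * N := by linarith
    rw [hg₁]
    exact div_lt_div_of_pos_right (by simpa using hm) h2N
  -- g₂ strictly antitone
  have hg₂anti : StrictAntiOn g₂ (Set.Ioi 0) := by
    intro ζ₁ h1 ζ₂ h2 h12
    simp only [mem_Ioi] at h1 h2
    have hm := hs_mono ζ₁ ζ₂ h1 h12
    have hf := aux_f_mono (a := s ζ₁) (b := s ζ₂)
      (mem_Ioi.mpr (hs_gt1 ζ₁ h1)) (mem_Ioi.mpr (hs_gt1 ζ₂ h2)) hm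
    rw [hg₂' ζ₁ h1, hg₂' ζ₂ h2]
    have h4N : (0:ℝ) < 1 / (4 * N) := by positivity
    simp only at hf
    nlinarith [hf]
  -- limit of g₁
  have hg₁lim : Tendsto g₁ (𝓝[>] (0:ℝ)) (𝓝 (1 / N)) := by
    rw [hg₁]
    have hc : ContinuousAt (fun ζ : ℝ => (1 + Real.sqrt (4 * ζ * N + 1)) / (2 * N)) 0 := by
      fun_prop (disch := intro; positivity)
    have := hc.tendsto
    simp only [mul_zero, zero_mul, zero_add, Real.sqrt_one] at this
    have h11 : (1 + 1) / (2 * N) = 1 / N := by ring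
    rw [h11] at this
    exact this.mono_left nhdsWithin_le_nhds
  -- limit of g₂
  have hg₂lim : Tendsto g₂ (𝓝[>] (0:ℝ)) (𝓝 1) := by
    have heq : ∀ ζ ∈ Set.Ioi (0:ℝ), g₂ ζ =
        1 - (2 * ζ * Real.log (s ζ + 1) - ζ * Real.log (4 * N) - Real.log ζ * ζ) := by
      intro ζ hζ
      simp only [mem_Ioi] at hζ
      have hsq := hs_sq ζ hζ
      have hs1 := hs_gt1 ζ hζ
      have hlog1 : Real.log (s ζ - 1) =
          Real.log (4 * N) + Real.log ζ - Real.log (s ζ + 1) := by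
        have hfac : s ζ - 1 = (4 * N) * ζ / (s ζ + 1) := by
          rw [eq_div_iff (by linarith : s ζ + 1 ≠ 0)]
          nlinarith [hsq]
        rw [hfac, Real.log_div (by positivity) (by linarith),
          Real.log_mul (by positivity) hζ.ne']
      have h2 := hg₂' ζ hζ
      rw [h2, hlog1]
      have hz : (s ζ ^ 2 - 1) = 4 * N * ζ := by nlinarith [hsq]
      rw [hz]
      have hNne : (4 * N) ≠ 0 := by positivity
      field_simp
      ring
    have hT : Tendsto (fun ζ : ℝ =>
        1 - (2 * ζ * Real.log (s ζ + 1) - ζ * Real.log (4 * N) - Real.log ζ * ζ))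
        (𝓝[>] (0:ℝ)) (𝓝 1) := by
      have h1 : Tendsto (fun ζ : ℝ => 2 * ζ * Real.log (s ζ + 1)) (𝓝[>] (0:ℝ)) (𝓝 0) := by
        have hc : ContinuousAt (fun ζ : ℝ => 2 * ζ * Real.log (Real.sqrt (4 * ζ * N + 1) + 1)) 0 := by
          apply ContinuousAt.mul
          · fun_prop
          · apply Real.continuousAt_log ?_ |>.comp
            · fun_prop
            · simp only [mul_zero, zero_mul, zero_add, Real.sqrt_one]
              norm_num
        have := hc.tendsto
        simp only [mul_zero, zero_mul] at this
        exact this.mono_left nhdsWithin_le_nhds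
      have h2 : Tendsto (fun ζ : ℝ => ζ * Real.log (4 * N)) (𝓝[>] (0:ℝ)) (𝓝 0) := by
        have hc : Continuous (fun ζ : ℝ => ζ * Real.log (4 * N)) := by fun_prop
        have := hc.tendsto (0:ℝ)
        simp only [zero_mul] at this
        exact this.mono_left nhdsWithin_le_nhds
      have h3 : Tendsto (fun ζ : ℝ => Real.log ζ * ζ) (𝓝[>] (0:ℝ)) (𝓝 0) := by
        have := tendsto_log_mul_rpow_nhdsGT_zero (r := 1) one_pos
        refine this.congr (fun x => ?_)
        rw [Real.rpow_one]
      have := ((h1.sub h2).sub h3)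
      simp only [sub_zero] at this
      have := (tendsto_const_nhds (x := (1:ℝ)) (f := 𝓝[>] (0:ℝ))).sub this
      simpa using this
    exact hT.congr' (eventually_nhdsWithin_of_forall (fun ζ hζ => (heq ζ hζ).symm))
  have hN1 : 1 / N < 1 := by
    rw [div_lt_one hN0]; exact hN
  refine ⟨hg₁mono, hg₂anti, hg₁lim, hg₂lim, hN1, ?_⟩
  -- existence and uniqueness of ζc
  set F : ℝ → ℝ := fun ζ => g₂ ζ - g₁ ζ with hF_def
  have hFanti : StrictAntiOn F (Set.Ioi 0) := by
    intro ζ₁ h1 ζ₂ h2 h12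
    have := hg₂anti h1 h2 h12
    have := hg₁mono h1 h2 h12
    simp only [hF_def]
    linarith
  -- F is continuous on Ioi 0
  have hFcont : ContinuousOn F (Set.Ioi 0) := by
    apply ContinuousOn.sub
    · rw [hg₂]
      apply ContinuousOn.sub continuousOn_const
      apply ContinuousOn.mul continuousOn_id
      apply ContinuousOn.log
      · apply ContinuousOn.div
        · fun_prop (disch := intro; positivity)
        · fun_prop
        · intro ζ hζ
          simp only [mem_Ioi] at hζ
          positivity
      · intro ζ hζ
        simp only [mem_Ioi] at hζ
        have hd : (0:ℝ) < 2 * ζ * N := by positivity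
        have hn : (0:ℝ) < 2 * ζ * N + 1 + s ζ := by
          have := Real.sqrt_nonneg (4 * ζ * N + 1); simp only [hs_def] at *; nlinarith
        positivity
    · rw [hg₁]
      apply ContinuousOn.div_const
      fun_prop
  -- F is negative at N
  have hFneg : F N < 0 := by
    have hsN := hs_gt1 N hN0
    have hsqN := hs_sq N hN0
    have hg₁N : 1 < g₁ N := by
      rw [hg₁]
      simp only
      rw [lt_div_iff₀ (by linarith : (0:ℝ) < 2 * N)]
      have : 2 * N - 1 < Real.sqrt (4 * N * N + 1) := by
        have h1 : (2 * N - 1) ^ 2 < 4 * N * N + 1 := by nlinarith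
        nlinarith [Real.sq_sqrt (show (0:ℝ) ≤ 4 * N * N + 1 by nlinarith),
          Real.sqrt_nonneg (4 * N * N + 1)]
      linarith
    have hg₂N : g₂ N ≤ 1 := by
      rw [hg₂' N hN0]
      have hlog : 0 < Real.log (s N + 1) - Real.log (s N - 1) := by
        have := aux_log_lb hsN
        have : (0:ℝ) < 2 / (s N + 1) := by positivity
        linarith [aux_log_lb hsN]
      have hsq1 : (0:ℝ) < s N ^ 2 - 1 := by nlinarith
      have : (0:ℝ) ≤ (1 / (4 * N)) * ((s N ^ 2 - 1) * (Real.log (s N + 1) - Real.log (s N - 1))) := by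
        positivity
      linarith
    simp only [hF_def]
    linarith
  -- F is eventually positive near 0⁺
  have hFlim : Tendsto F (𝓝[>] (0:ℝ)) (𝓝 (1 - 1 / N)) := hg₂lim.sub hg₁lim
  have hpos : ∀ᶠ ζ in 𝓝[>] (0:ℝ), 0 < F ζ := by
    apply hFlim.eventually_const_lt
    linarith
  have hsmall : ∀ᶠ ζ in 𝓝[>] (0:ℝ), ζ < N :=
    Filter.Eventually.filter_mono nhdsWithin_le_nhds (Filter.Tendsto.eventually_lt_const hN0 tendsto_id)
  obtain ⟨ζ₁, hζ₁F, hζ₁N, hζ₁0'⟩ := (hpos.and (hsmall.and self_mem_nhdsWithin)).exists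
  have hζ₁0 : 0 < ζ₁ := hζ₁0'
  -- IVT
  have hsub : Set.Icc ζ₁ N ⊆ Set.Ioi 0 := fun x hx => lt_of_lt_of_le hζ₁0 hx.1
  have hIVT := intermediate_value_Icc' (le_of_lt hζ₁N) (hFcont.mono hsub)
  have h0mem : (0:ℝ) ∈ Set.Icc (F N) (F ζ₁) := ⟨le_of_lt hFneg, le_of_lt hζ₁F⟩
  obtain ⟨ζc, hζc_mem, hζc_eq⟩ := hIVT h0mem
  have hζc0 : 0 < ζc := lt_of_lt_of_le hζ₁0 hζc_mem.1
  refine ⟨ζc, ⟨hζc0, by simp only [hF_def] at hζc_eq; linarith, ?_⟩, ?_⟩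
  · intro ζ hζ
    constructor
    · intro h
      by_contra hle
      push_neg at hle
      rcases eq_or_lt_of_le hle with heq | hlt
      · subst heq
        simp only [hF_def] at hζc_eq
        linarith
      · have := hFanti (mem_Ioi.mpr hζc0) (mem_Ioi.mpr hζ) hlt
        simp only [hF_def] at this hζc_eq
        linarith
    · intro h
      have := hFanti (mem_Ioi.mpr hζ) (mem_Ioi.mpr hζc0) h
      simp only [hF_def] at this hζc_eq
      linarith
  · rintro ζc' ⟨hζc'0, hζc'eq, -⟩
    by_contra hne
    rcases lt_or_gt_of_ne hne with hlt | hlt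
    · have := hFanti (mem_Ioi.mpr hζc'0) (mem_Ioi.mpr hζc0) hlt
      simp only [hF_def] at this hζc_eq
      linarith
    · have := hFanti (mem_Ioi.mpr hζc0) (mem_Ioi.mpr hζc'0) hlt
      simp only [hF_def] at this hζc_eq
      linarith
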